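/- For any complex numbers a and real r with a + ir and a − ir not non-positive integers and 1−a±ir not non-positive integers, Γ(a+ir)/Γ(1-a+ir) − Γ(a-ir)/Γ(1-a-ir) = −(2i/π) · sinh(πr) · cos(πa) · Γ(a+ir) · Γ(a−ir). -/

import Mathlib

open Complex

theorem gamma_sinh_identity (a : ℂ) (r : ℝ)
    (h1 : ∀ n : ℕ, a + Complex.I * r ≠ -(n : ℂ))
    (h2 : ∀ n : ℕ, a - Complex.I * r ≠ -(n : ℂ))
    (h3 : ∀ n : ℕ, 1 - a + Complex.I * r ≠ -(n : ℂ))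
    (h4 : ∀ n : ℕ, 1 - a - Complex.I * r ≠ -(n : ℂ)) :
    Complex.Gamma (a + Complex.I * r) / Complex.Gamma (1 - a + Complex.I * r)
      - Complex.Gamma (a - Complex.I * r) / Complex.Gamma (1 - a - Complex.I * r)
    = -(2 * Complex.I / (Real.pi : ℂ)) * Complex.sinh (Real.pi * r) * Complex.cos (Real.pi * a)
      * Complex.Gamma (a + Complex.I * r) * Complex.Gamma (a - Complex.I * r) := by
  set w : ℂ := a + Complex.I * r with hw
  set z : ℂ := a - Complex.I * r with hz
  have hπ : (Real.pi : ℂ) ≠ 0 := by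
    exact_mod_cast Real.pi_ne_zero
  have e1 : 1 - a + Complex.I * r = 1 - z := by rw [hz]; ring
  have e2 : 1 - a - Complex.I * r = 1 - w := by rw [hw]; ring
  rw [e1, e2]
  have Gw : Complex.Gamma w ≠ 0 := Complex.Gamma_ne_zero h1
  have Gz : Complex.Gamma z ≠ 0 := Complex.Gamma_ne_zero h2
  have Gz1 : Complex.Gamma (1 - z) ≠ 0 := by
    apply Complex.Gamma_ne_zero
    intro n; rw [← e1]; exact h3 n
  have Gw1 : Complex.Gamma (1 - w) ≠ 0 := by
    apply Complex.Gamma_ne_zero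
    intro n; rw [← e2]; exact h4 n
  have rz := Complex.Gamma_mul_Gamma_one_sub z
  have rw' := Complex.Gamma_mul_Gamma_one_sub w
  have sz : Complex.sin (Real.pi * z) ≠ 0 := by
    intro h
    rw [h, div_zero] at rz
    exact (mul_ne_zero Gz Gz1) rz
  have sw : Complex.sin (Real.pi * w) ≠ 0 := by
    intro h
    rw [h, div_zero] at rw'
    exact (mul_ne_zero Gw Gw1) rw'
  have hrz : Complex.Gamma z * Complex.Gamma (1 - z) * Complex.sin (Real.pi * z) = Real.pi := by
    rw [rz]; field_simp
  have hrw : Complex.Gamma w * Complex.Gamma (1 - w) * Complex.sin (Real.pi * w) = Real.pi := by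
    rw [rw']; field_simp
  have key1 : Complex.Gamma w / Complex.Gamma (1 - z)
      = Complex.Gamma w * Complex.Gamma z * Complex.sin (Real.pi * z) / Real.pi := by
    field_simp
    rw [show z * (Real.pi : ℂ) = Real.pi * z by ring]
    linear_combination -hrz
  have key2 : Complex.Gamma z / Complex.Gamma (1 - w)
      = Complex.Gamma z * Complex.Gamma w * Complex.sin (Real.pi * w) / Real.pi := by
    field_simp
    rw [show w * (Real.pi : ℂ) = Real.pi * w by ring]
    linear_combination -hrw
  rw [key1, key2]
  have hsin : Complex.sin (Real.pi * z) - Complex.sin (Real.pi * w)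
      = -(2 * Complex.I) * Complex.sinh (Real.pi * r) * Complex.cos (Real.pi * a) := by
    have hzz : (Real.pi : ℂ) * z = Real.pi * a - (Real.pi * r) * Complex.I := by
      rw [hz]; ring
    have hww : (Real.pi : ℂ) * w = Real.pi * a + (Real.pi * r) * Complex.I := by
      rw [hw]; ring
    rw [hzz, hww, Complex.sin_sub, Complex.sin_add, Complex.sin_mul_I]
    ring
  field_simp
  linear_combination hsin
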